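/- Let h(x) = −x·log₂x − (1−x)·log₂(1−x) denote the binary entropy, and let r₁, r₂, s₁, s₂ ∈ [0,1] be such that (r₁+s₁)/2 ≤ 1/2 and (r₂+s₂)/2 ≤ 1/2. If h((r₁+s₁)/2) + h((r₂+s₂)/2) ≥ 1, then r₁ + r₂ + s₁ + s₂ ≥ 0.44. -/

import Mathlib

/-- The binary entropy `h(x) = −x·log₂ x − (1−x)·log₂(1−x)` (with `h(0)=h(1)=0`,
which holds automatically since `Real.logb 2 0 = 0`). -/
noncomputable def binEntropy2 (x : ℝ) : ℝ :=
  -x * Real.logb 2 x - (1 - x) * Real.logb 2 (1 - x)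

lemma binEntropy2_eq (x : ℝ) : binEntropy2 x = Real.binEntropy x / Real.log 2 := by
  unfold binEntropy2 Real.binEntropy
  rw [Real.logb, Real.logb, Real.log_inv, Real.log_inv]
  ring

lemma pow_key : (100 : ℝ)^(100:ℕ) ≤ 2^(50:ℕ) * 11^(11:ℕ) * 89^(89:ℕ) := by
  norm_num

lemma key_log : 100 * Real.log 100 ≤ 50 * Real.log 2 + 11 * Real.log 11 + 89 * Real.log 89 := by
  have h := Real.log_le_log (by positivity) pow_key
  rw [Real.log_pow] at h
  rw [Real.log_mul (by positivity) (by positivity), Real.log_mul (by positivity) (by positivity),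
    Real.log_pow, Real.log_pow, Real.log_pow] at h
  push_cast at h
  linarith

lemma binEntropy_eleven : Real.binEntropy (11/100) ≤ Real.log 2 / 2 := by
  unfold Real.binEntropy
  have h1 : Real.log ((11:ℝ)/100)⁻¹ = Real.log 100 - Real.log 11 := by
    rw [Real.log_inv, Real.log_div (by norm_num) (by norm_num)]; ring
  have h2 : Real.log ((100:ℝ)/89) = Real.log 100 - Real.log 89 :=
    Real.log_div (by norm_num) (by norm_num)
  rw [h1]
  norm_num at h2 ⊢
  rw [h2]
  have := key_log
  linarith

/-- If `r₁, r₂, s₁, s₂ ∈ [0,1]` with `(r₁+s₁)/2 ≤ 1/2`, `(r₂+s₂)/2 ≤ 1/2` satisfy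
the entropic relation `h((r₁+s₁)/2) + h((r₂+s₂)/2) ≥ 1`, then
`r₁ + r₂ + s₁ + s₂ ≥ 0.44`. -/
theorem icp_quantitative_bound (r₁ r₂ s₁ s₂ : ℝ)
    (hr₁ : r₁ ∈ Set.Icc (0 : ℝ) 1) (hr₂ : r₂ ∈ Set.Icc (0 : ℝ) 1)
    (hs₁ : s₁ ∈ Set.Icc (0 : ℝ) 1) (hs₂ : s₂ ∈ Set.Icc (0 : ℝ) 1)
    (h1 : (r₁ + s₁) / 2 ≤ 1 / 2) (h2 : (r₂ + s₂) / 2 ≤ 1 / 2)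
    (hh : 1 ≤ binEntropy2 ((r₁ + s₁) / 2) + binEntropy2 ((r₂ + s₂) / 2)) :
    0.44 ≤ r₁ + r₂ + s₁ + s₂ := by
  obtain ⟨hr₁0, hr₁1⟩ := hr₁
  obtain ⟨hr₂0, hr₂1⟩ := hr₂
  obtain ⟨hs₁0, hs₁1⟩ := hs₁
  obtain ⟨hs₂0, hs₂1⟩ := hs₂
  set x := (r₁ + s₁) / 2 with hx
  set y := (r₂ + s₂) / 2 with hy
  have hx0 : (0:ℝ) ≤ x := by positivity
  have hy0 : (0:ℝ) ≤ y := by positivity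
  have hlog2 : (0:ℝ) < Real.log 2 := Real.log_pos (by norm_num)
  -- from hh: log 2 ≤ binEntropy x + binEntropy y
  have hh' : Real.log 2 ≤ Real.binEntropy x + Real.binEntropy y := by
    rw [binEntropy2_eq, binEntropy2_eq, ← add_div, le_div_iff₀ hlog2, one_mul] at hh
    linarith
  -- concavity: binEntropy x + binEntropy y ≤ 2 * binEntropy ((x+y)/2)
  have hcc := Real.strictConcave_binEntropy.concaveOn.2
    (Set.mem_Icc.mpr ⟨hx0, by linarith⟩) (Set.mem_Icc.mpr ⟨hy0, by linarith⟩)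
    (by norm_num : (0:ℝ) ≤ (1/2:ℝ)) (by norm_num : (0:ℝ) ≤ (1/2:ℝ)) (by norm_num)
  simp only [smul_eq_mul] at hcc
  set t := (x + y) / 2 with ht
  have hteq : (1/2 : ℝ) * x + (1/2 : ℝ) * y = t := by rw [ht]; ring
  rw [hteq] at hcc
  have htb : Real.log 2 / 2 ≤ Real.binEntropy t := by linarith
  -- t ≥ 11/100
  by_contra hcon
  push_neg at hcon
  have htlt : t < 11/100 := by
    rw [ht, hx, hy]
    norm_num at hcon ⊢
    linarith
  have ht0 : 0 ≤ t := by positivity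
  have hmono := Real.binEntropy_strictMonoOn
    (Set.mem_Icc.mpr ⟨ht0, by linarith⟩)
    (Set.mem_Icc.mpr ⟨by norm_num, by norm_num⟩) htlt
  have := binEntropy_eleven
  linarith
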